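/- arXiv:1904.08723 — 2 statements merged into one kernel-verified Lean document; each statement's English description precedes it below -/
import Mathlib

section
/- For any u_0 > 0 and V > 0 there exists a positive constant c_0 depending only on u_0 and V with the following property: for every n, every real symmetric n×n matrix X, every z = u + iv with 0 < v ≤ V and |u| ≤ u_0, and every j ∈ {1,…,n}, one has |R_{jj}(z)| ≤ c_0 (1 + |T_n(z)|^{1/2} |R_{jj}(z)| + |ε_j(z)| |R_{jj}(z)|), where R is the resolvent of W = n^{-1/2} X. -/
open MeasureTheory ProbabilityTheory Matrix Finset

namespace LocalSemicircleLaw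

/-- The resolvent `(A - z I)⁻¹` of a real matrix, viewed as a complex matrix. -/
noncomputable def resolv {m : Type*} [Fintype m] [DecidableEq m]
    (A : Matrix m m ℝ) (z : ℂ) : Matrix m m ℂ :=
  (A.map (fun x : ℝ => (x : ℂ)) - z • (1 : Matrix m m ℂ))⁻¹

/-- The normalized matrix `W = n^{-1/2} X`. -/
noncomputable def Wmat {n : ℕ} (X : Matrix (Fin n) (Fin n) ℝ) : Matrix (Fin n) (Fin n) ℝ :=
  (Real.sqrt n)⁻¹ • X

/-- The Stieltjes transform `m_n(z) = n⁻¹ Tr (W - z)⁻¹` of the empirical spectral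
distribution of `W = n^{-1/2} X`. -/
noncomputable def mn {n : ℕ} (X : Matrix (Fin n) (Fin n) ℝ) (z : ℂ) : ℂ :=
  (n : ℂ)⁻¹ * (resolv (Wmat X) z).trace

/-- The resolvent of the submatrix `W^{(j)}` of `W = n^{-1/2} X` obtained by deleting
row and column `j`. -/
noncomputable def subResolv {n : ℕ} (X : Matrix (Fin n) (Fin n) ℝ) (j : Fin n) (z : ℂ) :
    Matrix {k : Fin n // k ≠ j} {k : Fin n // k ≠ j} ℂ :=
  resolv ((Wmat X).submatrix (fun k : {k : Fin n // k ≠ j} => (k : Fin n))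
    (fun k : {k : Fin n // k ≠ j} => (k : Fin n))) z

/-- `ε_{1j} = X_{jj}/√n`. -/
noncomputable def eps1 {n : ℕ} (X : Matrix (Fin n) (Fin n) ℝ) (j : Fin n) : ℂ :=
  (X j j : ℂ) / (Real.sqrt n : ℂ)

/-- `ε_{2j} = -n⁻¹ ∑_{l ≠ k ∈ T_j} X_{jk} X_{jl} R^{(j)}_{kl}`. -/
noncomputable def eps2 {n : ℕ} (X : Matrix (Fin n) (Fin n) ℝ) (j : Fin n) (z : ℂ) : ℂ :=
  -(n : ℂ)⁻¹ * ∑ k : {k : Fin n // k ≠ j}, ∑ l : {l : Fin n // l ≠ j},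
    if k ≠ l then (X j (k : Fin n) : ℂ) * (X j (l : Fin n) : ℂ) * subResolv X j z k l else 0

/-- `ε_{3j} = -n⁻¹ ∑_{k ∈ T_j} (X_{jk}² - 1) R^{(j)}_{kk}`. -/
noncomputable def eps3 {n : ℕ} (X : Matrix (Fin n) (Fin n) ℝ) (j : Fin n) (z : ℂ) : ℂ :=
  -(n : ℂ)⁻¹ * ∑ k : {k : Fin n // k ≠ j},
    ((X j (k : Fin n) : ℂ) ^ 2 - 1) * subResolv X j z k k

/-- `ε_{4j} = n⁻¹ (Tr R - Tr R^{(j)})`. -/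
noncomputable def eps4 {n : ℕ} (X : Matrix (Fin n) (Fin n) ℝ) (j : Fin n) (z : ℂ) : ℂ :=
  (n : ℂ)⁻¹ * ((resolv (Wmat X) z).trace - (subResolv X j z).trace)

/-- `ε_j = ε_{1j} + ε_{2j} + ε_{3j} + ε_{4j}`. -/
noncomputable def epsTot {n : ℕ} (X : Matrix (Fin n) (Fin n) ℝ) (j : Fin n) (z : ℂ) : ℂ :=
  eps1 X j + eps2 X j z + eps3 X j z + eps4 X j z

/-- `T_n = n⁻¹ ∑_j ε_j R_{jj}`. -/
noncomputable def Tn {n : ℕ} (X : Matrix (Fin n) (Fin n) ℝ) (z : ℂ) : ℂ :=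
  (n : ℂ)⁻¹ * ∑ j : Fin n, epsTot X j z * resolv (Wmat X) z j j

lemma det_ne_zero_of_im {m : Type*} [Fintype m] [DecidableEq m]
    (A : Matrix m m ℝ) (hA : A.IsSymm) {z : ℂ} (hz : z.im ≠ 0) :
    IsUnit (A.map (fun x : ℝ => (x : ℂ)) - z • (1 : Matrix m m ℂ)).det := by
  set M : Matrix m m ℂ := A.map (fun x : ℝ => (x : ℂ)) - z • 1 with hM
  rw [isUnit_iff_ne_zero]
  intro hdet
  obtain ⟨x, hx0, hxv⟩ := (Matrix.exists_mulVec_eq_zero_iff).mpr hdet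
  have hAx : (A.map (fun x : ℝ => (x : ℂ))) *ᵥ x = z • x := by
    have := hxv
    rw [hM, Matrix.sub_mulVec, sub_eq_zero] at this
    rw [this, Matrix.smul_mulVec, Matrix.one_mulVec]
  set p : ℂ := ∑ i, (starRingEnd ℂ) (x i) * ∑ k, ((A i k : ℂ) * x k) with hp
  have hsym : ∀ i k, A i k = A k i := fun i k => hA.apply k i
  have hpconj : (starRingEnd ℂ) p = p := by
    rw [hp, map_sum]
    have : ∀ i, (starRingEnd ℂ) ((starRingEnd ℂ) (x i) * ∑ k, ((A i k : ℂ) * x k))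
        = ∑ k, (starRingEnd ℂ) (x k) * ((A k i : ℂ) * x i) := by
      intro i
      rw [_root_.map_mul, Complex.conj_conj, map_sum, Finset.mul_sum]
      apply Finset.sum_congr rfl
      intro k _
      rw [_root_.map_mul, Complex.conj_ofReal, hsym i k]
      ring
    rw [Finset.sum_congr rfl (fun i _ => this i), Finset.sum_comm]
    apply Finset.sum_congr rfl
    intro i _
    rw [Finset.mul_sum]
  set q : ℂ := ∑ i, (starRingEnd ℂ) (x i) * x i with hq'
  have hqre : q = ((∑ i, Complex.normSq (x i) : ℝ) : ℂ) := by
    rw [hq']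
    push_cast
    apply Finset.sum_congr rfl
    intro i _
    rw [Complex.normSq_eq_conj_mul_self]
  have hq : q ≠ 0 := by
    rw [hqre]
    rw [Ne, Complex.ofReal_eq_zero]
    obtain ⟨i, hi⟩ := Function.ne_iff.mp hx0
    have h1 : 0 < Complex.normSq (x i) := Complex.normSq_pos.mpr hi
    have h2 : ∀ i ∈ Finset.univ, (0:ℝ) ≤ Complex.normSq (x i) :=
      fun i _ => Complex.normSq_nonneg _
    intro h
    have := Finset.sum_pos' h2 ⟨i, Finset.mem_univ i, h1⟩
    linarith [this, h.symm ▸ this]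
  have hpzq : p = z * q := by
    rw [hp, hq', Finset.mul_sum]
    apply Finset.sum_congr rfl
    intro i _
    have : ∑ k, ((A i k : ℂ) * x k) = z * x i := by
      have := congrFun hAx i
      simpa [Matrix.mulVec, dotProduct, Matrix.map_apply] using this
    rw [this]
    ring
  have hqconj : (starRingEnd ℂ) q = q := by
    rw [hq', map_sum]
    apply Finset.sum_congr rfl
    intro i _
    rw [_root_.map_mul, Complex.conj_conj]
    ring
  have hzq : (z - (starRingEnd ℂ) z) * q = 0 := by
    have h1 : (starRingEnd ℂ) p = (starRingEnd ℂ) z * q := by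
      rw [hpzq, _root_.map_mul, hqconj]
    linear_combination -hpzq + h1 - hpconj
  rcases mul_eq_zero.mp hzq with h | h
  · have : (starRingEnd ℂ) z = z := by linear_combination -h
    exact hz (Complex.conj_eq_iff_im.mp this)
  · exact hq h

lemma schur_identity {n : ℕ} (X : Matrix (Fin n) (Fin n) ℝ) (hX : X.IsSymm) {z : ℂ}
    (hz : z.im ≠ 0) (j : Fin n) :
    (epsTot X j z - z - mn X z) * resolv (Wmat X) z j j = 1 := by
  classical
  have hn : 0 < n := j.pos
  set c : ℝ → ℂ := fun x => (x : ℂ) with hc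
  set W := Wmat X with hWdef
  have hWsymm : W.IsSymm := by
    show Wᵀ = W
    rw [hWdef]
    show ((Real.sqrt n)⁻¹ • X)ᵀ = (Real.sqrt n)⁻¹ • X
    rw [Matrix.transpose_smul, hX.eq]
  set M : Matrix (Fin n) (Fin n) ℂ := W.map c - z • 1 with hMdef
  have hdet : IsUnit M.det := det_ne_zero_of_im W hWsymm hz
  have hRM : M⁻¹ * M = 1 := Matrix.nonsing_inv_mul M hdet
  have hResolv : resolv W z = M⁻¹ := rfl
  set f : {k : Fin n // k ≠ j} → Fin n := fun k => (k : Fin n) with hf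
  have hfinj : Function.Injective f := Subtype.val_injective
  set Mj : Matrix {k : Fin n // k ≠ j} {k : Fin n // k ≠ j} ℂ := M.submatrix f f with hMjdef
  have hMjeq : Mj = (W.submatrix f f).map c - z • 1 := by
    ext i k
    simp only [hMjdef, hMdef, Matrix.submatrix_apply, Matrix.sub_apply, Matrix.map_apply,
      Matrix.smul_apply, Matrix.one_apply, hfinj.eq_iff, smul_eq_mul]
  have hWjsymm : (W.submatrix f f).IsSymm := by
    show (W.submatrix f f)ᵀ = W.submatrix f f
    ext i k
    simp only [Matrix.transpose_apply, Matrix.submatrix_apply]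
    exact hWsymm.apply _ _
  have hdetj : IsUnit Mj.det := by
    rw [hMjeq]; exact det_ne_zero_of_im _ hWjsymm hz
  have hMjRj : Mj * Mj⁻¹ = 1 := Matrix.mul_nonsing_inv Mj hdetj
  set Rj := Mj⁻¹ with hRjdef
  have hsub : subResolv X j z = Rj := by
    rw [hRjdef, hMjeq]
    rfl
  set S : ℂ := M j j - ∑ k : {k : Fin n // k ≠ j}, ∑ l : {l : Fin n // l ≠ j},
    M j (f k) * (Rj k l * M (f l) j) with hS
  set x : Fin n → ℂ := fun i => if h : i ≠ j then -∑ l, Rj ⟨i, h⟩ l * M (f l) j else 1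
    with hxdef
  have hxj : x j = 1 := by simp [hxdef]
  have hxk : ∀ k : {k : Fin n // k ≠ j}, x (f k) = -∑ l, Rj k l * M (f l) j := by
    intro k
    simp only [hxdef]
    exact dif_pos (show f k ≠ j from k.prop)
  have hsplit : ∀ g : Fin n → ℂ, ∑ i, g i = g j + ∑ k : {k : Fin n // k ≠ j}, g (f k) := by
    intro g
    rw [Fintype.sum_eq_add_sum_compl j g]
    congr 1
    apply Finset.sum_subtype
    intro i
    simp
  have hcollect : ∀ i : Fin n, ∑ k : {k : Fin n // k ≠ j}, M i (f k) * x (f k)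
      = -∑ k : {k : Fin n // k ≠ j}, ∑ l, M i (f k) * (Rj k l * M (f l) j) := by
    intro i
    rw [← Finset.sum_neg_distrib]
    apply Finset.sum_congr rfl
    intro k _
    rw [hxk k, mul_neg, Finset.mul_sum]
  have key : M *ᵥ x = S • (Pi.single j (1 : ℂ) : Fin n → ℂ) := by
    funext i
    have hmv : (M *ᵥ x) i = ∑ k, M i k * x k := by
      simp [Matrix.mulVec, dotProduct]
    rw [hmv, hsplit (fun k => M i k * x k)]
    by_cases hij : i = j
    · subst hij
      rw [hxj, mul_one, hcollect i]
      simp only [Pi.smul_apply, Pi.single_eq_same, smul_eq_mul, mul_one, hS]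
      ring
    · have hi : i ≠ j := hij
      rw [hxj, mul_one, hcollect i]
      have h2 : ∑ k : {k : Fin n // k ≠ j}, ∑ l, M i (f k) * (Rj k l * M (f l) j)
          = ∑ l, ((Mj * Rj) ⟨i, hi⟩ l) * M (f l) j := by
        rw [Finset.sum_comm]
        apply Finset.sum_congr rfl
        intro l _
        rw [Matrix.mul_apply, Finset.sum_mul]
        apply Finset.sum_congr rfl
        intro k _
        have : Mj ⟨i, hi⟩ k = M i (f k) := rfl
        rw [this]
        ring
      rw [h2, hMjRj]
      have h3 : ∑ l, ((1 : Matrix {k : Fin n // k ≠ j} {k : Fin n // k ≠ j} ℂ) ⟨i, hi⟩ l)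
          * M (f l) j = M i j := by
        have : ∀ l : {k : Fin n // k ≠ j},
            ((1 : Matrix {k : Fin n // k ≠ j} {k : Fin n // k ≠ j} ℂ) ⟨i, hi⟩ l) * M (f l) j
            = if (⟨i, hi⟩ : {k : Fin n // k ≠ j}) = l then M (f l) j else 0 := by
          intro l
          rw [Matrix.one_apply]
          split <;> simp
        rw [Finset.sum_congr rfl (fun l _ => this l), Finset.sum_ite_eq]
        simp
        rfl
      rw [h3]
      simp [Pi.single_eq_of_ne hij]
  have hfinal : S * M⁻¹ j j = 1 := by
    have hx1 : x = S • (M⁻¹ *ᵥ (Pi.single j (1 : ℂ) : Fin n → ℂ)) := by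
      calc x = (M⁻¹ * M) *ᵥ x := by rw [hRM, Matrix.one_mulVec]
      _ = M⁻¹ *ᵥ (M *ᵥ x) := by rw [← Matrix.mulVec_mulVec]
      _ = M⁻¹ *ᵥ (S • (Pi.single j (1 : ℂ) : Fin n → ℂ)) := by rw [key]
      _ = S • (M⁻¹ *ᵥ (Pi.single j (1 : ℂ) : Fin n → ℂ)) := Matrix.mulVec_smul _ _ _
    have h4 := congrFun hx1 j
    rw [hxj] at h4
    simp only [Matrix.mulVec_single_one, Matrix.col_apply, Pi.smul_apply, smul_eq_mul, mul_one] at h4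
    linear_combination -h4
  -- identify S with epsTot - z - mn
  have hsq : Real.sqrt n * Real.sqrt n = (n : ℝ) := Real.mul_self_sqrt (Nat.cast_nonneg n)
  have hsq2 : ((Real.sqrt n : ℝ) : ℂ) ^ 2 = (n : ℂ) := by
    rw [← Complex.ofReal_pow, Real.sq_sqrt (Nat.cast_nonneg n), Complex.ofReal_natCast]
  have hc2 : ((Real.sqrt n : ℝ) : ℂ)⁻¹ ^ 2 = (n : ℂ)⁻¹ := by rw [inv_pow, hsq2]
  have hMjj : M j j = ((Real.sqrt n : ℝ) : ℂ)⁻¹ * (X j j : ℂ) - z := by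
    simp [hMdef, hWdef, Wmat, Matrix.sub_apply, Matrix.map_apply, Matrix.smul_apply,
      Matrix.one_apply_eq, hc]
  have hMjk : ∀ k : {k : Fin n // k ≠ j}, M j (f k) = ((Real.sqrt n : ℝ) : ℂ)⁻¹ * (X j (f k) : ℂ) := by
    intro k
    have h1 : j ≠ f k := Ne.symm k.prop
    simp [hMdef, hWdef, Wmat, Matrix.one_apply_ne h1, hc]
  have hMkj : ∀ l : {k : Fin n // k ≠ j}, M (f l) j = ((Real.sqrt n : ℝ) : ℂ)⁻¹ * (X j (f l) : ℂ) := by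
    intro l
    have hXs : X (f l) j = X j (f l) := hX.apply j (f l)
    simp [hMdef, hWdef, Wmat, Matrix.one_apply_ne (show f l ≠ j from l.prop), hXs, hc]
  have hQ : ∑ k : {k : Fin n // k ≠ j}, ∑ l : {l : Fin n // l ≠ j},
      M j (f k) * (Rj k l * M (f l) j)
      = ∑ k : {k : Fin n // k ≠ j}, ∑ l : {l : Fin n // l ≠ j},
        (n : ℂ)⁻¹ * ((X j (f k) : ℂ) * (X j (f l) : ℂ) * Rj k l) := by
    apply Finset.sum_congr rfl
    intro k _
    apply Finset.sum_congr rfl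
    intro l _
    rw [hMjk k, hMkj l]
    linear_combination ((X j (f k) : ℂ) * (X j (f l) : ℂ) * Rj k l) * hc2
  have hinner : ∀ k : {k : Fin n // k ≠ j}, ∑ l : {l : Fin n // l ≠ j},
      (n : ℂ)⁻¹ * ((X j (f k) : ℂ) * (X j (f l) : ℂ) * Rj k l)
      = (∑ l : {l : Fin n // l ≠ j}, if k ≠ l then
            (n : ℂ)⁻¹ * ((X j (f k) : ℂ) * (X j (f l) : ℂ) * Rj k l) else 0)
        + ((n : ℂ)⁻¹ * (((X j (f k) : ℂ)) ^ 2 - 1) * Rj k k + (n : ℂ)⁻¹ * Rj k k) := by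
    intro k
    have e1 : ∀ l : {l : Fin n // l ≠ j},
        (n : ℂ)⁻¹ * ((X j (f k) : ℂ) * (X j (f l) : ℂ) * Rj k l)
        = (if k ≠ l then (n : ℂ)⁻¹ * ((X j (f k) : ℂ) * (X j (f l) : ℂ) * Rj k l) else 0)
          + (if k = l then (n : ℂ)⁻¹ * ((X j (f k) : ℂ) * (X j (f l) : ℂ) * Rj k l) else 0) := by
      intro l
      by_cases h : k = l <;> simp [h]
    rw [Finset.sum_congr rfl (fun l _ => e1 l), Finset.sum_add_distrib, Finset.sum_ite_eq]
    simp only [Finset.mem_univ, if_true]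
    congr 1
    ring
  have hQ2 : ∑ k : {k : Fin n // k ≠ j}, ∑ l : {l : Fin n // l ≠ j},
      M j (f k) * (Rj k l * M (f l) j)
      = -eps2 X j z - eps3 X j z + (n : ℂ)⁻¹ * ∑ k : {k : Fin n // k ≠ j}, Rj k k := by
    rw [hQ, Finset.sum_congr rfl (fun k _ => hinner k), Finset.sum_add_distrib,
      Finset.sum_add_distrib]
    have t1 : ∑ k : {k : Fin n // k ≠ j}, (∑ l : {l : Fin n // l ≠ j}, if k ≠ l then
          (n : ℂ)⁻¹ * ((X j (f k) : ℂ) * (X j (f l) : ℂ) * Rj k l) else 0)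
        = -eps2 X j z := by
      have hpull : (∑ k : {k : Fin n // k ≠ j}, ∑ l : {l : Fin n // l ≠ j}, if k ≠ l then
            (n : ℂ)⁻¹ * ((X j (f k) : ℂ) * (X j (f l) : ℂ) * Rj k l) else 0)
          = (n : ℂ)⁻¹ * ∑ k : {k : Fin n // k ≠ j}, ∑ l : {l : Fin n // l ≠ j}, if k ≠ l then
            ((X j (f k) : ℂ) * (X j (f l) : ℂ) * Rj k l) else 0 := by
        rw [Finset.mul_sum]
        apply Finset.sum_congr rfl
        intro k _
        rw [Finset.mul_sum]
        apply Finset.sum_congr rfl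
        intro l _
        rw [mul_ite, mul_zero]
      rw [hpull]
      unfold eps2
      rw [hsub]
      ring
    have t2 : ∑ k : {k : Fin n // k ≠ j}, (n : ℂ)⁻¹ * (((X j (f k) : ℂ)) ^ 2 - 1) * Rj k k
        = -eps3 X j z := by
      have hpull : ∑ k : {k : Fin n // k ≠ j}, (n : ℂ)⁻¹ * (((X j (f k) : ℂ)) ^ 2 - 1) * Rj k k
          = (n : ℂ)⁻¹ * ∑ k : {k : Fin n // k ≠ j}, (((X j (f k) : ℂ)) ^ 2 - 1) * Rj k k := by
        rw [Finset.mul_sum]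
        apply Finset.sum_congr rfl
        intro k _
        ring
      rw [hpull]
      unfold eps3
      rw [hsub]
      ring
    have t3 : ∑ k : {k : Fin n // k ≠ j}, (n : ℂ)⁻¹ * Rj k k
        = (n : ℂ)⁻¹ * ∑ k : {k : Fin n // k ≠ j}, Rj k k := by
      rw [Finset.mul_sum]
    rw [t1, t2, t3]
    ring
  have htrRj : (subResolv X j z).trace = ∑ k : {k : Fin n // k ≠ j}, Rj k k := by
    rw [hsub]
    rfl
  have heps1 : eps1 X j = ((Real.sqrt n : ℝ) : ℂ)⁻¹ * (X j j : ℂ) := by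
    unfold eps1
    rw [div_eq_inv_mul]
  have hSeq : epsTot X j z - z - mn X z = S := by
    rw [hS, hQ2]
    unfold epsTot eps4 mn
    rw [hResolv, htrRj, hMjj, heps1]
    ring
  rw [hSeq, hResolv]
  exact hfinal

lemma tn_identity {n : ℕ} (X : Matrix (Fin n) (Fin n) ℝ) (hX : X.IsSymm) {z : ℂ}
    (hz : z.im ≠ 0) (hn : 0 < n) :
    Tn X z = 1 + (z + mn X z) * mn X z := by
  have h : ∀ j : Fin n, epsTot X j z * resolv (Wmat X) z j j
      = 1 + (z + mn X z) * resolv (Wmat X) z j j := by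
    intro j
    have hs := schur_identity X hX hz j
    linear_combination hs
  have hne : (n : ℂ) ≠ 0 := Nat.cast_ne_zero.mpr hn.ne'
  have htr : (resolv (Wmat X) z).trace = ∑ j, resolv (Wmat X) z j j := by
    simp [Matrix.trace, Matrix.diag]
  have hsum : ∑ j, resolv (Wmat X) z j j = (n : ℂ) * mn X z := by
    unfold mn
    rw [htr]
    field_simp
  unfold Tn
  rw [Finset.sum_congr rfl (fun j _ => h j), Finset.sum_add_distrib, Finset.sum_const,
    ← Finset.mul_sum, hsum]
  simp only [Finset.card_univ, Fintype.card_fin, nsmul_eq_mul, mul_one]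
  field_simp

/-- **Recursive bound for diagonal resolvent entries** (Lemma 3.3).  For any
`u₀, V > 0` there is `c₀ > 0` depending only on `u₀` and `V` such that for every real
symmetric `n × n` matrix `X`, every `z = u + iv` with `0 < v ≤ V` and `|u| ≤ u₀`, and
every `j`, one has
`|R_{jj}| ≤ c₀ (1 + |T_n|^{1/2} |R_{jj}| + |ε_j| |R_{jj}|)`. -/
theorem diag_resolvent_recursive_bound
    (u₀ V : ℝ) (hu₀pos : 0 < u₀) (hVpos : 0 < V) :
    ∃ c₀ : ℝ, 0 < c₀ ∧
      ∀ (n : ℕ) (X : Matrix (Fin n) (Fin n) ℝ), X.IsSymm →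
        ∀ (u v : ℝ), 0 < v → v ≤ V → |u| ≤ u₀ →
          ∀ j : Fin n,
            ‖resolv (Wmat X) (u + v * Complex.I) j j‖
              ≤ c₀ * (1
                + Real.sqrt ‖Tn X (u + v * Complex.I)‖
                    * ‖resolv (Wmat X) (u + v * Complex.I) j j‖
                + ‖epsTot X j (u + v * Complex.I)‖
                    * ‖resolv (Wmat X) (u + v * Complex.I) j j‖) := by
  have hc₀pos : 0 < 2 * (u₀ + V + 2) := by positivity
  refine ⟨2 * (u₀ + V + 2), hc₀pos, ?_⟩
  intro n X hX u v hv hvV hu j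
  set c₀ : ℝ := 2 * (u₀ + V + 2) with hc₀def
  set z : ℂ := (u : ℂ) + (v : ℂ) * Complex.I with hzdef
  have hzim : z.im = v := by simp [hzdef]
  have hzim' : z.im ≠ 0 := by rw [hzim]; exact ne_of_gt hv
  have hn : 0 < n := j.pos
  have hzbound : ‖z‖ ≤ u₀ + V := by
    rw [hzdef]
    calc ‖(u : ℂ) + (v : ℂ) * Complex.I‖ ≤ ‖(u : ℂ)‖ + ‖(v : ℂ) * Complex.I‖ := norm_add_le _ _
    _ = |u| + |v| := by
        rw [norm_mul, Complex.norm_I, mul_one, Complex.norm_real, Complex.norm_real,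
          Real.norm_eq_abs, Real.norm_eq_abs]
    _ ≤ u₀ + V := by
        have : |v| = v := abs_of_pos hv
        rw [this]
        linarith
  set ρ : ℝ := ‖resolv (Wmat X) z j j‖ with hρdef
  set E : ℝ := ‖epsTot X j z‖ with hEdef
  set T : ℝ := ‖Tn X z‖ with hTdef
  have hschur := schur_identity X hX hzim' j
  have htn := tn_identity X hX hzim' hn
  have hnorm1 : ‖epsTot X j z - z - mn X z‖ * ρ = 1 := by
    rw [hρdef, ← norm_mul, hschur, norm_one]
  have hρpos : 0 < ρ := by
    rcases lt_or_eq_of_le (norm_nonneg (resolv (Wmat X) z j j)) with h | h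
    · exact h
    · exfalso
      rw [hρdef, ← h, mul_zero] at hnorm1
      norm_num at hnorm1
  have hzm : ‖z + mn X z‖ - E ≤ ‖epsTot X j z - z - mn X z‖ := by
    have h1 : epsTot X j z - z - mn X z = -((z + mn X z) - epsTot X j z) := by ring
    rw [h1, norm_neg]
    exact le_trans (sub_le_sub_left (le_refl _) _) (norm_sub_norm_le _ _)
  -- the key lower bound
  have ha : c₀ * (1 / c₀) = 1 := mul_one_div_cancel (ne_of_gt hc₀pos)
  have hapos : 0 < 1 / c₀ := by positivity
  have hδ : 1 / c₀ ≤ ‖z + mn X z‖ + Real.sqrt T := by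
    by_contra hcon
    push_neg at hcon
    have hsq : Real.sqrt T ^ 2 = T := Real.sq_sqrt (norm_nonneg _)
    have hzm_lt : ‖z + mn X z‖ < 1 / c₀ := by
      nlinarith [Real.sqrt_nonneg T]
    have hT2 : T < (1 / c₀) ^ 2 := by
      nlinarith [Real.sqrt_nonneg T, norm_nonneg (z + mn X z)]
    have hmq : mn X z * (z + mn X z) = Tn X z - 1 := by linear_combination -htn
    have h3 : 1 - T ≤ ‖mn X z‖ * ‖z + mn X z‖ := by
      rw [← norm_mul, hmq]
      have h4 : ‖(1 : ℂ)‖ - ‖Tn X z‖ ≤ ‖(1 : ℂ) - Tn X z‖ := norm_sub_norm_le _ _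
      rw [norm_one] at h4
      have h5 : ‖(1 : ℂ) - Tn X z‖ = ‖Tn X z - 1‖ := by rw [← norm_neg]; ring_nf
      rw [h5] at h4
      exact h4
    have hm_b : ‖mn X z‖ ≤ ‖z + mn X z‖ + ‖z‖ := by
      calc ‖mn X z‖ = ‖(z + mn X z) - z‖ := by congr 1; ring
      _ ≤ ‖z + mn X z‖ + ‖z‖ := norm_sub_le _ _
    have hA : (0:ℝ) ≤ u₀ + V := by linarith
    nlinarith [norm_nonneg (mn X z), norm_nonneg (z + mn X z), ha, hapos,
      mul_le_mul_of_nonneg_right hm_b (norm_nonneg (z + mn X z))]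
  have step1 : (‖z + mn X z‖ - E) * ρ ≤ 1 := by
    rw [← hnorm1]
    exact mul_le_mul_of_nonneg_right hzm (norm_nonneg _)
  have step2 : (1 / c₀) * ρ ≤ ‖z + mn X z‖ * ρ + Real.sqrt T * ρ := by
    nlinarith [hδ, hρpos.le]
  have final : (1 / c₀) * ρ ≤ 1 + Real.sqrt T * ρ + E * ρ := by nlinarith [step1, step2]
  nlinarith [final, ha, hc₀pos, mul_le_mul_of_nonneg_left final (le_of_lt hc₀pos)]

end LocalSemicircleLaw
end

section
/- Let n ≥ 2 and r ≥ 2 be integers and R̲ > 0, and let L = [L_{jk}]_{j,k=1}^n be a random symmetric 0/1 matrix whose upper-triangular entries L_{jk}, 1 ≤ j ≤ k ≤ n, are independent with P(L_{jk} = 0) ≤ 1/(n R̲^4). Call indices j and k linked if L_{jk} = 0, and call j, k connected if there is a finite sequence j = j_1, j_2, …, j_l = k with j_ν linked to j_{ν+1} for each ν. Then the probability that there exist r distinct indices j_1, …, j_r ∈ {1,…,n} that are pairwise connected is at most e^{3r} n r^{-1} R̲^{-4(r−1)}. -/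
open MeasureTheory ProbabilityTheory Finset

namespace ConnAux

variable {n : ℕ}

/-- Normalize an unordered pair into the upper triangle. -/
def nrm (a b : Fin n) : {q : Fin n × Fin n // q.1 ≤ q.2} :=
  if h : a ≤ b then ⟨(a, b), h⟩ else ⟨(b, a), le_of_not_ge h⟩

lemma nrm_cases (a b : Fin n) : (nrm a b).1 = (a, b) ∨ (nrm a b).1 = (b, a) := by
  unfold nrm; split <;> simp

lemma nrm_eq {a b c d : Fin n} (h : nrm a b = nrm c d) :
    (a = c ∧ b = d) ∨ (a = d ∧ b = c) := by
  have h' : (nrm a b).1 = (nrm c d).1 := by rw [h]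
  rcases nrm_cases a b with h1 | h1 <;> rcases nrm_cases c d with h2 | h2 <;>
    rw [h1, h2] at h' <;> simp [Prod.ext_iff] at h' <;> tauto

lemma crossing {α : Type*} {rel : α → α → Prop} {A : Finset α} {a b : α}
    (h : Relation.ReflTransGen rel a b) (ha : a ∉ A) (hb : b ∈ A) :
    ∃ x y, x ∉ A ∧ y ∈ A ∧ rel x y := by
  revert ha
  induction h using Relation.ReflTransGen.head_induction_on with
  | refl => exact fun ha => absurd hb ha
  | head hrel htail ih =>
    rename_i u c
    intro hu
    by_cases hc : c ∈ A
    · exact ⟨u, c, hu, hc, hrel⟩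
    · exact ih hc

lemma exists_tree {n m : ℕ} {rel : Fin n → Fin n → Prop}
    (s : Finset (Fin n)) (hconn : ∀ j ∈ s, ∀ k ∈ s, Relation.ReflTransGen rel j k)
    (hcard : m + 1 ≤ s.card) :
    ∃ v : Fin (m + 1) → Fin n, Function.Injective v ∧ v 0 ∈ s ∧
      (∀ i, Relation.ReflTransGen rel (v i) (v 0)) ∧
      ∃ pr : Fin (m + 1) → Fin (m + 1),
        ∀ i, i ≠ 0 → pr i < i ∧ rel (v i) (v (pr i)) := by
  induction m with
  | zero =>
    obtain ⟨a, ha⟩ := Finset.card_pos.mp (lt_of_lt_of_le Nat.zero_lt_one hcard)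
    have hone : ∀ i : Fin (0 + 1), i = 0 := fun i => Fin.ext (by omega)
    exact ⟨fun _ => a, fun i j _ => by rw [hone i, hone j], ha,
      fun i => by rw [hone i], fun i => i,
      fun i hi => absurd (hone i) hi⟩
  | succ k ih =>
    obtain ⟨v, hinj, hv0, hcon, pr, hpr⟩ := ih (by omega)
    set A : Finset (Fin n) := Finset.image v Finset.univ with hA
    have hAcard : A.card = k + 1 := by
      rw [hA, Finset.card_image_of_injective _ hinj, Finset.card_univ, Fintype.card_fin]
    obtain ⟨w, hws, hwA⟩ : ∃ w ∈ s, w ∉ A := by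
      by_contra hcon'
      push_neg at hcon'
      have := Finset.card_le_card hcon'
      omega
    obtain ⟨x, y, hx, hy, hxy⟩ := crossing (hconn w hws (v 0) hv0) hwA
      (Finset.mem_image_of_mem v (Finset.mem_univ 0))
    obtain ⟨j, -, hj⟩ := Finset.mem_image.mp hy
    have hxv : ∀ i, x ≠ v i := fun i hxi =>
      hx (hxi ▸ Finset.mem_image_of_mem v (Finset.mem_univ i))
    have h0 : (Fin.snoc v x : Fin (k + 2) → Fin n) 0 = v 0 := by
      rw [show (0 : Fin (k + 2)) = Fin.castSucc 0 from (Fin.castSucc_zero).symm,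
        Fin.snoc_castSucc]
    have hrelxj : rel x (v j) := hj ▸ hxy
    refine ⟨Fin.snoc v x, ?_, ?_, ?_, Fin.snoc (fun i => (pr i).castSucc) j.castSucc, ?_⟩
    · intro i₁ i₂ h
      induction i₁ using Fin.lastCases with
      | last =>
        induction i₂ using Fin.lastCases with
        | last => rfl
        | cast i₂ =>
          rw [Fin.snoc_last, Fin.snoc_castSucc] at h
          exact absurd h (hxv i₂)
      | cast i₁ =>
        induction i₂ using Fin.lastCases with
        | last =>
          rw [Fin.snoc_last, Fin.snoc_castSucc] at h
          exact absurd h.symm (hxv i₁)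
        | cast i₂ =>
          rw [Fin.snoc_castSucc, Fin.snoc_castSucc] at h
          exact congrArg _ (hinj h)
    · rw [h0]; exact hv0
    · intro i
      rw [h0]
      induction i using Fin.lastCases with
      | last =>
        rw [Fin.snoc_last]
        exact Relation.ReflTransGen.head hrelxj (hcon j)
      | cast i =>
        rw [Fin.snoc_castSucc]
        exact hcon i
    · intro i hi
      induction i using Fin.lastCases with
      | last =>
        rw [Fin.snoc_last, Fin.snoc_last, Fin.snoc_castSucc]
        exact ⟨Fin.castSucc_lt_last j, hrelxj⟩
      | cast i =>
        have hi0 : i ≠ 0 := fun h => hi (by rw [h, Fin.castSucc_zero])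
        obtain ⟨hlt, hrel⟩ := hpr i hi0
        rw [Fin.snoc_castSucc, Fin.snoc_castSucc, Fin.snoc_castSucc]
        exact ⟨Fin.castSucc_lt_castSucc_iff.mpr hlt, hrel⟩

end ConnAux

/-- **Probability of an `r`-connected-inadmissible configuration** (Section 3).  If the
upper-triangular entries of a random symmetric 0/1 matrix `L` are independent with
`P(L_{jk} = 0) ≤ 1/(n R̲⁴)`, then the probability that there exist `r` distinct indices
that are pairwise connected (joined by paths of links, a link between `a` and `b` meaning
`L_{ab} = 0`) is at most `e^{3r} n r⁻¹ R̲^{-4(r-1)}`. -/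
theorem connected_inadmissible_probability_bound
    (n r : ℕ) (hn : 2 ≤ n) (hr : 2 ≤ r) (Runder : ℝ) (hR : 0 < Runder)
    (Ω : Type) [MeasurableSpace Ω] (μ : Measure Ω) [IsProbabilityMeasure μ]
    (L : Ω → Fin n → Fin n → ℕ)
    (hmeas : ∀ j k, Measurable fun ω => L ω j k)
    (h01 : ∀ ω j k, L ω j k = 0 ∨ L ω j k = 1)
    (hsymm : ∀ ω j k, L ω j k = L ω k j)
    (hindep : iIndepFun
      (fun (q : {q : Fin n × Fin n // q.1 ≤ q.2}) ω => L ω q.1.1 q.1.2) μ)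
    (hp : ∀ j k, μ {ω | L ω j k = 0} ≤ ENNReal.ofReal (1 / (n * Runder ^ 4))) :
    μ {ω | ∃ s : Finset (Fin n), s.card = r ∧
        ∀ j ∈ s, ∀ k ∈ s, Relation.ReflTransGen (fun a b => L ω a b = 0) j k}
      ≤ ENNReal.ofReal
          (Real.exp (3 * r) * n * (r : ℝ)⁻¹ * (Runder ^ (4 * (r - 1)))⁻¹) := by
  classical
  obtain ⟨m, rfl⟩ : ∃ m, r = m + 1 := ⟨r - 1, by omega⟩
  set p : ENNReal := ENNReal.ofReal (1 / (n * Runder ^ 4)) with hp_def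
  set E : {q : Fin n × Fin n // q.1 ≤ q.2} → Set Ω :=
    (fun q => {ω | L ω q.1.1 q.1.2 = 0}) with hE_def
  -- measure of an intersection of link events
  have measA : ∀ t : Finset {q : Fin n × Fin n // q.1 ≤ q.2},
      μ (⋂ q ∈ t, E q) ≤ p ^ t.card := by
    intro t
    have hmeasure : μ (⋂ q ∈ t, E q) = ∏ q ∈ t, μ (E q) :=
      hindep.meas_biInter (fun q _ => ⟨{0}, measurableSet_singleton 0, rfl⟩)
    rw [hmeasure]
    calc ∏ q ∈ t, μ (E q) ≤ ∏ q ∈ t, p :=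
          Finset.prod_le_prod' fun q _ => hp q.1.1 q.1.2
      _ = p ^ t.card := Finset.prod_const p
  set T : ((Fin (m+1) → Fin n) × (Fin (m+1) → Fin (m+1))) →
      Finset {q : Fin n × Fin n // q.1 ≤ q.2} := (fun vg =>
    (Finset.univ.filter fun i => vg.2 i ≠ i).image fun i =>
      ConnAux.nrm (vg.1 i) (vg.1 (vg.2 i))) with hT_def
  set Good : Finset ((Fin (m+1) → Fin n) × (Fin (m+1) → Fin (m+1))) :=
    Finset.univ.filter (fun vg => StrictMono vg.1 ∧ (T vg).card = m) with hGood_def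
  have hsub : {ω | ∃ s : Finset (Fin n), s.card = m + 1 ∧ ∀ j ∈ s, ∀ k ∈ s,
      Relation.ReflTransGen (fun a b => L ω a b = 0) j k}
      ⊆ ⋃ vg ∈ Good, ⋂ q ∈ T vg, E q := by
    rintro ω ⟨s, hcard, hconn⟩
    obtain ⟨v, hinj, -, -, pr, hpr⟩ := ConnAux.exists_tree s hconn (le_of_eq hcard.symm)
    set τ : Equiv.Perm (Fin (m+1)) := Tuple.sort v with hτ
    set w : Fin (m+1) → Fin n := v ∘ τ with hw
    have hwmono : StrictMono w :=
      (Tuple.monotone_sort v).strictMono_of_injective (hinj.comp τ.injective)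
    set g : Fin (m+1) → Fin (m+1) :=
      (fun i => if τ i = 0 then i else τ.symm (pr (τ i))) with hg
    have hgfix : ∀ i, g i ≠ i ↔ τ i ≠ 0 := by
      intro i
      by_cases h0 : τ i = 0
      · simp [hg, h0]
      · have hne : pr (τ i) ≠ τ i := (hpr (τ i) h0).1.ne
        simp only [hg, if_neg h0]
        constructor
        · intro _; exact h0
        · intro _ hgi
          exact hne (by simpa using congrArg τ hgi)
    have hfilter : (Finset.univ.filter fun i => g i ≠ i)
        = (Finset.univ.filter fun j : Fin (m+1) => j ≠ 0).image τ.symm := by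
      ext i
      simp only [Finset.mem_filter, Finset.mem_univ, true_and, Finset.mem_image, hgfix i]
      constructor
      · intro h; exact ⟨τ i, h, τ.symm_apply_apply i⟩
      · rintro ⟨j, hj, rfl⟩; simpa using hj
    have hT : T (w, g) = (Finset.univ.filter fun j : Fin (m+1) => j ≠ 0).image
        (fun j => ConnAux.nrm (v j) (v (pr j))) := by
      show (Finset.univ.filter fun i => g i ≠ i).image _ = _
      rw [hfilter, Finset.image_image]
      refine Finset.image_congr ?_
      intro j hj
      simp only [Finset.coe_filter, Set.mem_setOf_eq, Finset.mem_univ, true_and] at hj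
      have e1 : τ (τ.symm j) = j := τ.apply_symm_apply j
      simp only [Function.comp_apply, hw, hg, e1, if_neg hj]
      rw [τ.apply_symm_apply]
    have hinjOn : Set.InjOn (fun j => ConnAux.nrm (v j) (v (pr j)))
        ↑(Finset.univ.filter fun j : Fin (m+1) => j ≠ 0) := by
      intro i hi j hj h
      simp only [Finset.coe_filter, Set.mem_setOf_eq, Finset.mem_univ, true_and] at hi hj
      rcases ConnAux.nrm_eq h with ⟨h1, h2⟩ | ⟨h1, h2⟩
      · exact hinj h1
      · exfalso
        have e1 : i = pr j := hinj h1
        have e2 : pr i = j := hinj h2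
        have l1 := (hpr i hi).1
        have l2 := (hpr j hj).1
        have hij : i < j := by rw [e1]; exact l2
        have hji : j < i := by rw [← e2]; exact l1
        exact absurd hij (not_lt.mpr hji.le)
    have hcardT : (T (w, g)).card = m := by
      rw [hT, Finset.card_image_of_injOn hinjOn]
      rw [Finset.filter_ne', Finset.card_erase_of_mem (Finset.mem_univ 0),
        Finset.card_univ, Fintype.card_fin]
      omega
    have hGoodmem : (w, g) ∈ Good :=
      Finset.mem_filter.mpr ⟨Finset.mem_univ _, hwmono, hcardT⟩
    have hmem : ω ∈ ⋂ q ∈ T (w, g), E q := by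
      simp only [Set.mem_iInter]
      intro q hq
      rw [hT] at hq
      obtain ⟨j, hj, rfl⟩ := Finset.mem_image.mp hq
      have hj0 : j ≠ 0 := (Finset.mem_filter.mp hj).2
      have hrel : L ω (v j) (v (pr j)) = 0 := (hpr j hj0).2
      have hrel' : L ω (v (pr j)) (v j) = 0 := by rw [hsymm]; exact hrel
      rcases ConnAux.nrm_cases (v j) (v (pr j)) with h | h <;>
        · show L ω _ _ = 0
          rw [h]
          first
          | exact hrel
          | exact hrel'
    exact Set.mem_biUnion hGoodmem hmem
  have hcount : Good.card ≤ n.choose (m+1) * (m+1)^(m+1) := by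
    have hinj2 : Set.InjOn
        (fun vg : (Fin (m+1) → Fin n) × (Fin (m+1) → Fin (m+1)) =>
          (Finset.image vg.1 Finset.univ, vg.2)) ↑Good := by
      rintro ⟨v, g⟩ hv ⟨v', g'⟩ hv' h
      simp only [Finset.mem_coe, hGood_def, Finset.mem_filter, Finset.mem_univ,
        true_and] at hv hv'
      have h1' : Finset.image v Finset.univ = Finset.image v' Finset.univ :=
        congrArg Prod.fst h
      have h2' : g = g' := congrArg Prod.snd h
      have hc : (Finset.image v Finset.univ).card = m + 1 := by
        rw [Finset.card_image_of_injective _ hv.1.injective, Finset.card_univ,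
          Fintype.card_fin]
      have e1 := Finset.orderEmbOfFin_unique hc
        (fun x => Finset.mem_image_of_mem _ (Finset.mem_univ x)) hv.1
      have e2 := Finset.orderEmbOfFin_unique hc
        (fun x => by rw [h1']; exact Finset.mem_image_of_mem v' (Finset.mem_univ x)) hv'.1
      exact Prod.ext (e1.trans e2.symm) h2'
    calc Good.card
        ≤ ((Finset.univ.powersetCard (m+1)) ×ˢ
            (Finset.univ : Finset (Fin (m+1) → Fin (m+1)))).card := by
          refine Finset.card_le_card_of_injOn _ (fun vg hvg => ?_) hinj2
          simp only [Finset.mem_coe, hGood_def, Finset.mem_filter, Finset.mem_univ, true_and] at hvg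
          refine Finset.mem_product.mpr ⟨Finset.mem_powersetCard.mpr
            ⟨Finset.subset_univ _, ?_⟩, Finset.mem_univ _⟩
          rw [Finset.card_image_of_injective _ hvg.1.injective, Finset.card_univ,
            Fintype.card_fin]
      _ = n.choose (m+1) * (m+1)^(m+1) := by
          rw [Finset.card_product, Finset.card_powersetCard, Finset.card_univ,
            Fintype.card_fin, Finset.card_univ, Fintype.card_fun, Fintype.card_fin]
  have hbound : μ {ω | ∃ s : Finset (Fin n), s.card = m + 1 ∧ ∀ j ∈ s, ∀ k ∈ s,
      Relation.ReflTransGen (fun a b => L ω a b = 0) j k}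
      ≤ ((n.choose (m+1) * (m+1)^(m+1) : ℕ) : ENNReal) * p ^ m := by
    calc μ _ ≤ μ (⋃ vg ∈ Good, ⋂ q ∈ T vg, E q) := measure_mono hsub
      _ ≤ ∑ vg ∈ Good, μ (⋂ q ∈ T vg, E q) := measure_biUnion_finset_le Good _
      _ ≤ ∑ _vg ∈ Good, p ^ m := Finset.sum_le_sum (fun vg hvg => by
            have h1 := measA (T vg)
            rwa [(Finset.mem_filter.mp hvg).2.2] at h1)
      _ = Good.card • p ^ m := Finset.sum_const _
      _ = (Good.card : ENNReal) * p ^ m := nsmul_eq_mul _ _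
      _ ≤ _ := mul_le_mul_left (Nat.cast_le.mpr hcount) _
  refine le_trans hbound ?_
  have hx : (0:ℝ) ≤ 1 / (n * Runder ^ 4) := by positivity
  have hNp : ((n.choose (m+1) * (m+1)^(m+1) : ℕ) : ENNReal) * p ^ m
      = ENNReal.ofReal (((n.choose (m+1) * (m+1)^(m+1) : ℕ) : ℝ)
        * (1 / (↑n * Runder^4))^m) := by
    rw [hp_def, ← ENNReal.ofReal_pow hx, ← ENNReal.ofReal_natCast,
      ← ENNReal.ofReal_mul (Nat.cast_nonneg _)]
  rw [hNp]
  apply ENNReal.ofReal_le_ofReal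
  have hpow : Runder ^ (4 * (m + 1 - 1)) = (Runder ^ 4) ^ m := by
    rw [Nat.add_sub_cancel, pow_mul]
  rw [hpow, Nat.cast_mul, Nat.cast_pow]
  set a : ℝ := (n : ℝ) with ha_def
  set c : ℝ := Runder ^ 4 with hc_def
  set b : ℝ := ((m + 1 : ℕ) : ℝ) with hb_def
  have ha : (2:ℝ) ≤ a := by rw [ha_def]; exact_mod_cast hn
  have ha0 : (0:ℝ) < a := by linarith
  have hc0 : (0:ℝ) < c := by rw [hc_def]; positivity
  have hb0 : (0:ℝ) < b := by rw [hb_def]; positivity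
  have hC : ((n.choose (m+1) : ℕ) : ℝ) ≤ a ^ (m+1) / (Nat.factorial (m+1) : ℝ) := by
    have h := Nat.choose_le_pow_div (α := ℝ) (m+1) n
    rwa [← ha_def] at h
  have h2 : b ^ (m+1) / (Nat.factorial (m+1) : ℝ) ≤ Real.exp b :=
    Real.pow_div_factorial_le_exp (x := b) hb0.le (m+1)
  have h3 : b ≤ Real.exp (2*b) := by
    have := Real.add_one_le_exp (2*b)
    linarith
  have s2 : Real.exp b * b ≤ Real.exp (3*b) := by
    have e3 : Real.exp (3*b) = Real.exp b * Real.exp (2*b) := by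
      rw [← Real.exp_add]; ring_nf
    rw [e3]
    exact mul_le_mul_of_nonneg_left h3 (Real.exp_nonneg b)
  have h4 : Real.exp b ≤ Real.exp (3*b) / b := (le_div_iff₀ hb0).mpr s2
  have s1 : ((n.choose (m+1) : ℕ) : ℝ) * b^(m+1) ≤ a^(m+1) * Real.exp b := by
    calc ((n.choose (m+1) : ℕ) : ℝ) * b^(m+1)
        ≤ (a^(m+1) / (Nat.factorial (m+1) : ℝ)) * b^(m+1) :=
          mul_le_mul_of_nonneg_right hC (by positivity)
      _ = a^(m+1) * (b^(m+1) / (Nat.factorial (m+1) : ℝ)) := by ring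
      _ ≤ a^(m+1) * Real.exp b := mul_le_mul_of_nonneg_left h2 (by positivity)
  have ham : a ^ m ≠ 0 := by positivity
  have hcore : ((n.choose (m+1) : ℕ) : ℝ) * b^(m+1) * (a^m)⁻¹
      ≤ Real.exp (3*b) * a * b⁻¹ := by
    calc ((n.choose (m+1) : ℕ) : ℝ) * b^(m+1) * (a^m)⁻¹
        ≤ (a^(m+1) * Real.exp b) * (a^m)⁻¹ :=
          mul_le_mul_of_nonneg_right s1 (by positivity)
      _ = a * Real.exp b := by
          rw [pow_succ]
          field_simp
      _ ≤ a * (Real.exp (3*b) / b) := mul_le_mul_of_nonneg_left h4 ha0.le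
      _ = Real.exp (3*b) * a * b⁻¹ := by ring
  have hsplit : (1/(a*c))^m = (a^m)⁻¹ * (c^m)⁻¹ := by
    rw [one_div, mul_inv, mul_pow, inv_pow, inv_pow]
  rw [hsplit]
  calc ((n.choose (m+1) : ℕ) : ℝ) * b^(m+1) * ((a^m)⁻¹ * (c^m)⁻¹)
      = (((n.choose (m+1) : ℕ) : ℝ) * b^(m+1) * (a^m)⁻¹) * (c^m)⁻¹ := by ring
    _ ≤ (Real.exp (3*b) * a * b⁻¹) * (c^m)⁻¹ :=
        mul_le_mul_of_nonneg_right hcore (by positivity)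
    _ = Real.exp (3*b) * a * b⁻¹ * (c^m)⁻¹ := by ring
end
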